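/- For any integer b and any nonnegative integers a and d, the Zelevinsky involution of the simple multisegment {[b+k, b+d+k] : 0 ≤ k ≤ a} (a+1 segments, each of length d+1) is the simple multisegment {[b+k, b+a+k] : 0 ≤ k ≤ d} (d+1 segments, each of length a+1). -/
import Mathlib


/-- A finite multiset of integer pairs `(b, e)` is a multisegment if each pair
satisfies `b ≤ e`; the pair `(b, e)` encodes the segment `{b, b+1, …, e}`. -/
def IsMultisegment (α : Multiset (ℤ × ℤ)) : Prop := ∀ p ∈ α, p.1 ≤ p.2

/-- The length `e - b + 1` of the segment `(b, e)`. -/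
def segLen (p : ℤ × ℤ) : ℕ := (p.2 - p.1 + 1).toNat

/-- `L_α`: the maximal length of a segment of `α`. -/
def maxLen (α : Multiset (ℤ × ℤ)) : ℕ := (α.map segLen).sup

/-- The union of the segments `p` and `q` is a segment strictly containing both. -/
def Linked (p q : ℤ × ℤ) : Prop :=
  q.1 ≤ p.2 + 1 ∧ p.1 ≤ q.2 + 1 ∧
    (min p.1 q.1, max p.2 q.2) ≠ p ∧ (min p.1 q.1, max p.2 q.2) ≠ q

/-- The intersection of two segments, as a multiset (empty if the segments are disjoint). -/
def interMS (p q : ℤ × ℤ) : Multiset (ℤ × ℤ) :=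
  if max p.1 q.1 ≤ min p.2 q.2 then {(max p.1 q.1, min p.2 q.2)} else 0

/-- An elementary operation replaces two segments whose union is a segment strictly
containing both by their union and (if nonempty) their intersection. -/
def ElemStep (α β : Multiset (ℤ × ℤ)) : Prop :=
  ∃ p q rest, α = p ::ₘ q ::ₘ rest ∧ Linked p q ∧
    β = (min p.1 q.1, max p.2 q.2) ::ₘ (interMS p q + rest)

/-- The partial order on multisegments: `α ≤ β` iff `β` is obtained from `α` by
a finite (possibly empty) sequence of elementary operations. -/
def msLE (α β : Multiset (ℤ × ℤ)) : Prop := Relation.ReflTransGen ElemStep α β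

/-- Mœglin–Waldspurger: the chain `Δ_e, Δ_{e-1}, …, Δ_m` starting from `Δ`,
where at each step we pass to a segment of `α` with end value one less, preceding
the current segment, and with maximal base value (fuel-driven recursion). -/
def mwChainAux : ℕ → Multiset (ℤ × ℤ) → ℤ × ℤ → List (ℤ × ℤ)
  | 0, _, Δ => [Δ]
  | n + 1, α, Δ =>
    let s := ((α.filter (fun p => p.2 = Δ.2 - 1 ∧ p.1 < Δ.1)).map Prod.fst).toFinset
    if h : s.Nonempty then Δ :: mwChainAux n α (s.max' h, Δ.2 - 1) else [Δ]

/-- The Mœglin–Waldspurger chain `Δ_e, Δ_{e-1}, …, Δ_m` of `α`: here `e` is the largest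
end value of a segment of `α` and `Δ_e` has maximal base value among segments with
end value `e`. -/
def mwChain (α : Multiset (ℤ × ℤ)) : List (ℤ × ℤ) :=
  let ends := (α.map Prod.snd).toFinset
  if h : ends.Nonempty then
    let e := ends.max' h
    let bases := ((α.filter (fun p => p.2 = e)).map Prod.fst).toFinset
    if hb : bases.Nonempty then mwChainAux α.card α (bases.max' hb, e) else []
  else []

/-- `M(α) = [m, e]`. -/
def mwSegment (α : Multiset (ℤ × ℤ)) : ℤ × ℤ :=
  (((mwChain α).getLastD (0, 0)).2, ((mwChain α).headD (0, 0)).2)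

/-- Delete the end value from a segment, discarding the segment if it becomes empty. -/
def mwShrink (p : ℤ × ℤ) : Multiset (ℤ × ℤ) :=
  if p.1 ≤ p.2 - 1 then {(p.1, p.2 - 1)} else 0

/-- `α ∖ M(α)`: delete the integer `i` from the segment `Δ_i` for each `m ≤ i ≤ e`. -/
def mwResidual (α : Multiset (ℤ × ℤ)) : Multiset (ℤ × ℤ) :=
  (α - ↑(mwChain α)) + (↑(mwChain α) : Multiset (ℤ × ℤ)).bind mwShrink

/-- The total number of integers occurring in the segments of `α` (with multiplicity). -/
def msSize (α : Multiset (ℤ × ℤ)) : ℕ := (α.map segLen).sum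

def tildeAux : ℕ → Multiset (ℤ × ℤ) → Multiset (ℤ × ℤ)
  | 0, _ => 0
  | n + 1, α => if α = 0 then 0 else mwSegment α ::ₘ tildeAux n (mwResidual α)

/-- The Zelevinsky involution `α ↦ α~`, computed by the Mœglin–Waldspurger algorithm:
`∅~ = ∅` and `α~ = {M(α)} ⊎ (α ∖ M(α))~`. -/
def tilde (α : Multiset (ℤ × ℤ)) : Multiset (ℤ × ℤ) := tildeAux (msSize α) α

/-- The simple multisegment `{[b, e], [b+1, e+1], …, [b+n-1, e+n-1]}`. -/
def simpleMS (b e : ℤ) (n : ℕ) : Multiset (ℤ × ℤ) :=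
  (Multiset.range n).map fun k => (b + (k : ℤ), e + (k : ℤ))

/-- A multisegment is simple if it has the form `{[b,e], [b+1,e+1], …, [b+n-1, e+n-1]}`
with `b ≤ e` and `n ≥ 1`. -/
def IsSimple (α : Multiset (ℤ × ℤ)) : Prop :=
  ∃ (b e : ℤ) (n : ℕ), b ≤ e ∧ 1 ≤ n ∧ α = simpleMS b e n

/-- The union `⋃_{Δ ∈ α} Δ` of the segments of `α`, as a set of integers. -/
def unionSet (α : Multiset (ℤ × ℤ)) : Set ℤ := {x | ∃ p ∈ α, p.1 ≤ x ∧ x ≤ p.2}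

/-- `c_α`: the minimal number of segments whose union is `⋃_{Δ ∈ α} Δ`. -/
noncomputable def cNum (α : Multiset (ℤ × ℤ)) : ℕ :=
  sInf {n | ∃ β : Multiset (ℤ × ℤ), IsMultisegment β ∧ β.card = n ∧ unionSet β = unionSet α}



lemma simpleMS_eq (b e : ℤ) (n : ℕ) :
    simpleMS b e n = (Multiset.range n).map (fun k : ℕ => (b + (k:ℤ), e + (k:ℤ))) := by
  simp [simpleMS, Multiset.map_map]

lemma filter_range_eq (n k : ℕ) (hk : k < n) (p : ℕ → Prop) [DecidablePred p]
    (hp : ∀ j, j < n → (p j ↔ j = k)) : (Multiset.range n).filter p = {k} := by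
  rw [Multiset.filter_congr (q := fun x => x = k)
    (fun x hx => hp x (Multiset.mem_range.mp hx)), Multiset.filter_eq',
    Multiset.count_eq_one_of_mem (Multiset.nodup_range n) (Multiset.mem_range.mpr hk)]
  rfl

def chainL (b d : ℤ) : ℕ → List (ℤ × ℤ)
  | 0 => [(b, b + d)]
  | k + 1 => (b + ((k : ℤ) + 1), b + d + ((k : ℤ) + 1)) :: chainL b d k

lemma mem_simpleMS {b e : ℤ} {n : ℕ} {p : ℤ × ℤ} :
    p ∈ simpleMS b e n ↔ ∃ k : ℕ, k < n ∧ p = (b + (k : ℤ), e + (k : ℤ)) := by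
  simp [simpleMS_eq, eq_comm]

lemma filter_simpleMS (b d : ℤ) (a k : ℕ) (hk : k < a + 1) (c : ℤ) (hc : b + k < c) :
    (simpleMS b (b + d) (a+1)).filter (fun p => p.2 = b + d + (k : ℤ) ∧ p.1 < c)
      = {(b + (k : ℤ), b + d + (k : ℤ))} := by
  rw [simpleMS_eq, Multiset.filter_map _ (fun j : ℕ => (b + (j : ℤ), b + d + (j : ℤ)))
    (Multiset.range (a+1)),
    filter_range_eq _ k hk _ (fun j hj => ?_)]
  · simp
  · simp only [Function.comp]
    constructor
    · rintro ⟨h1, _⟩; omega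
    · rintro rfl; exact ⟨rfl, hc⟩

lemma mwChainAux_simpleMS (b : ℤ) (d a : ℕ) :
    ∀ k n : ℕ, k ≤ n → k ≤ a →
      mwChainAux n (simpleMS b (b + d) (a+1)) (b + (k : ℤ), b + d + (k : ℤ))
        = chainL b d k := by
  intro k
  induction k with
  | zero =>
    intro n _ _
    cases n with
    | zero => simp [mwChainAux, chainL]
    | succ m =>
      rw [mwChainAux]
      have hempty : ((simpleMS b (b+d) (a+1)).filter
          (fun p => p.2 = (b + d + ((0:ℕ):ℤ)) - 1 ∧ p.1 < b + ((0:ℕ):ℤ))) = 0 := by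
        rw [Multiset.filter_eq_nil]
        intro p hp
        obtain ⟨j, hj, rfl⟩ := mem_simpleMS.mp hp
        push_neg
        intro h
        exfalso; omega
      rw [hempty]
      simp [chainL]
  | succ k ih =>
    intro n hn hk
    obtain ⟨m, rfl⟩ : ∃ m, n = m + 1 := ⟨n - 1, by omega⟩
    rw [mwChainAux]
    have hfil : ((simpleMS b (b+d) (a+1)).filter
        (fun p => p.2 = (b + d + ((k+1:ℕ):ℤ)) - 1 ∧ p.1 < b + ((k+1:ℕ):ℤ)))
        = {(b + (k : ℤ), b + d + (k : ℤ))} := by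
      have := filter_simpleMS b d a k (by omega) (b + ((k+1:ℕ):ℤ)) (by push_cast; omega)
      rw [← this]
      apply Multiset.filter_congr
      intro p _
      constructor
      · rintro ⟨h1, h2⟩; exact ⟨by push_cast at h1 ⊢; omega, h2⟩
      · rintro ⟨h1, h2⟩; exact ⟨by push_cast at h1 ⊢; omega, h2⟩
    rw [hfil]
    simp only [Multiset.map_singleton, Multiset.toFinset_singleton]
    rw [dif_pos (Finset.singleton_nonempty _)]
    rw [Finset.max'_singleton]
    rw [chainL]
    simp only [Nat.cast_add, Nat.cast_one]
    rw [show (b + d + ((k:ℤ)+1)) - 1 = b + d + (k:ℤ) by ring]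
    rw [ih m (by omega) (by omega)]

lemma simpleMS_ne_zero (b e : ℤ) (n : ℕ) (hn : 0 < n) : simpleMS b e n ≠ 0 := by
  simp [simpleMS_eq, Multiset.map_eq_zero, ← Multiset.card_pos, Multiset.card_range]
  omega

lemma card_simpleMS (b e : ℤ) (n : ℕ) : (simpleMS b e n).card = n := by
  simp [simpleMS_eq]

lemma mwChain_simpleMS (b : ℤ) (d a : ℕ) :
    mwChain (simpleMS b (b + d) (a+1)) = chainL b d a := by
  rw [mwChain]
  set α := simpleMS b (b + (d:ℤ)) (a+1) with hα
  have hends : (α.map Prod.snd).toFinset.Nonempty := by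
    refine ⟨b + d, ?_⟩
    rw [Multiset.mem_toFinset, Multiset.mem_map]
    exact ⟨(b, b + d), mem_simpleMS.mpr ⟨0, by omega, by simp⟩, rfl⟩
  rw [dif_pos hends]
  have he : (α.map Prod.snd).toFinset.max' hends = b + d + a := by
    apply le_antisymm
    · apply Finset.max'_le
      intro y hy
      rw [Multiset.mem_toFinset, Multiset.mem_map] at hy
      obtain ⟨p, hp, rfl⟩ := hy
      obtain ⟨k, hk, rfl⟩ := mem_simpleMS.mp hp
      simp only
      omega
    · apply Finset.le_max'
      rw [Multiset.mem_toFinset, Multiset.mem_map]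
      exact ⟨(b + (a:ℤ), b + d + (a:ℤ)), mem_simpleMS.mpr ⟨a, by omega, rfl⟩, rfl⟩
  rw [he]  -- hope this rewrites; `he` about max'
  have hfil : α.filter (fun p => p.2 = b + (d:ℤ) + (a:ℤ)) = {(b + (a:ℤ), b + d + (a:ℤ))} := by
    have := filter_simpleMS b d a a (by omega) (b + (a:ℤ) + 1) (by omega)
    rw [← this]
    apply Multiset.filter_congr
    intro p hp
    obtain ⟨k, hk, rfl⟩ := mem_simpleMS.mp hp
    constructor
    · intro h1; refine ⟨h1, ?_⟩; simp only at h1 ⊢; omega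
    · rintro ⟨h1, _⟩; exact h1
  simp only [hfil, Multiset.map_singleton, Multiset.toFinset_singleton]
  rw [dif_pos (Finset.singleton_nonempty _), Finset.max'_singleton, card_simpleMS]
  exact mwChainAux_simpleMS b d a a (a+1) (by omega) le_rfl

lemma chainL_getLastD (b d : ℤ) (k : ℕ) (x : ℤ × ℤ) :
    (chainL b d k).getLastD x = (b, b + d) := by
  induction k generalizing x with
  | zero => rfl
  | succ k ih => rw [chainL, List.getLastD_cons]; exact ih _

lemma chainL_headD (b d : ℤ) (k : ℕ) (x : ℤ × ℤ) :
    ((chainL b d k).headD x).2 = b + d + k := by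
  cases k with
  | zero => simp [chainL]
  | succ k => simp [chainL]

lemma mwSegment_simpleMS (b : ℤ) (d a : ℕ) :
    mwSegment (simpleMS b (b + d) (a+1)) = (b + (d:ℤ), b + (d:ℤ) + (a:ℤ)) := by
  rw [mwSegment, mwChain_simpleMS, chainL_getLastD, chainL_headD]

lemma chainL_coe (b : ℤ) (d a : ℕ) :
    (↑(chainL b d a) : Multiset (ℤ × ℤ)) = simpleMS b (b + d) (a+1) := by
  induction a with
  | zero => simp [chainL, simpleMS_eq, Multiset.range_succ]
  | succ a ih =>
    rw [chainL, ← Multiset.cons_coe, ih, simpleMS_eq, simpleMS_eq,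
      Multiset.range_succ, Multiset.map_cons, Multiset.range_succ, Multiset.map_cons]
    push_cast
    rw [Multiset.range_succ, Multiset.map_cons]

lemma mwResidual_simpleMS (b : ℤ) (d a : ℕ) :
    mwResidual (simpleMS b (b + d) (a+1)) =
      if d = 0 then 0 else simpleMS b (b + d - 1) (a+1) := by
  rw [mwResidual, mwChain_simpleMS, chainL_coe, tsub_self, zero_add]
  rw [show (simpleMS b (b + (d:ℤ)) (a+1)).bind mwShrink
      = (Multiset.range (a+1)).bind (fun k => mwShrink (b + (k:ℤ), b + d + (k:ℤ))) from by
    rw [simpleMS_eq, Multiset.bind_map]]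
  by_cases hd : d = 0
  · subst hd
    rw [if_pos rfl]
    have hb : ((Multiset.range (a+1)).bind fun k => mwShrink (b + (k:ℤ), b + ((0:ℕ):ℤ) + (k:ℤ)))
        = (Multiset.range (a+1)).bind (fun _ => 0) :=
      Multiset.bind_congr (fun k _ => by rw [mwShrink]; rw [if_neg (by push_cast; omega)])
    rw [hb]
    simp
  · rw [if_neg hd]
    have hb : ((Multiset.range (a+1)).bind fun k => mwShrink (b + (k:ℤ), b + (d:ℤ) + (k:ℤ)))
        = (Multiset.range (a+1)).bind (fun k => {(b + (k:ℤ), b + (d:ℤ) - 1 + (k:ℤ))}) :=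
      Multiset.bind_congr (fun k _ => by
        rw [mwShrink, if_pos (by push_cast; omega)]
        congr 2
        push_cast; ring)
    rw [hb, simpleMS_eq, Multiset.bind_singleton]

lemma tildeAux_zero (n : ℕ) : tildeAux n 0 = 0 := by
  cases n with
  | zero => rfl
  | succ m => rw [tildeAux, if_pos rfl]

lemma tildeAux_simpleMS (b : ℤ) (a : ℕ) :
    ∀ d n : ℕ, d ≤ n →
      tildeAux (n+1) (simpleMS b (b + (d:ℤ)) (a+1)) = simpleMS b (b + (a:ℤ)) (d+1) := by
  intro d
  induction d with
  | zero =>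
    intro n _
    rw [tildeAux, if_neg (simpleMS_ne_zero _ _ _ (by omega)),
      mwSegment_simpleMS b 0 a, mwResidual_simpleMS b 0 a, if_pos rfl, tildeAux_zero]
    simp [simpleMS_eq, Multiset.range_succ]
  | succ d ih =>
    intro n hn
    obtain ⟨m, rfl⟩ : ∃ m, n = m + 1 := ⟨n - 1, by omega⟩
    rw [tildeAux, if_neg (simpleMS_ne_zero _ _ _ (by omega)),
      mwSegment_simpleMS b (d+1) a, mwResidual_simpleMS b (d+1) a,
      if_neg (by omega),
      show b + ((d+1:ℕ):ℤ) - 1 = b + (d:ℤ) by push_cast; ring,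
      ih m (by omega)]
    rw [simpleMS_eq, simpleMS_eq, Multiset.range_succ, Multiset.map_cons]
    push_cast
    rw [show b + ((d:ℤ)+1) + (a:ℤ) = b + (a:ℤ) + ((d:ℤ)+1) by ring]
    rw [Multiset.range_succ, Multiset.map_cons]
    push_cast
    rw [Multiset.range_succ, Multiset.map_cons]


/-- The Zelevinsky involution of the simple multisegment
`{[b+k, b+d+k] : 0 ≤ k ≤ a}` is the simple multisegment `{[b+k, b+a+k] : 0 ≤ k ≤ d}`. -/
theorem tilde_simpleMS_sym (b : ℤ) (a d : ℕ) :
    tilde (simpleMS b (b + (d : ℤ)) (a + 1)) = simpleMS b (b + (a : ℤ)) (d + 1) := by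
  have hsize : msSize (simpleMS b (b + (d:ℤ)) (a+1)) = (a+1) * (d+1) := by
    rw [msSize, simpleMS_eq, Multiset.map_map]
    have hc : (segLen ∘ fun k : ℕ => (b + (k:ℤ), b + (d:ℤ) + (k:ℤ))) = fun _ : ℕ => d + 1 := by
      funext k
      simp only [segLen, Function.comp]
      omega
    rw [hc]
    simp [Multiset.map_const', mul_comm]
    ring
  have h2 : d + 1 ≤ (a+1) * (d+1) := Nat.le_mul_of_pos_left (d+1) (by omega)
  rw [tilde, hsize, show (a+1)*(d+1) = ((a+1)*(d+1) - 1) + 1 by omega]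
  exact tildeAux_simpleMS b a d ((a+1)*(d+1) - 1) (by omega)
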